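/- Under the hypotheses of the previous statement, if additionally ‖ξ(0)‖ ≤ M, then ‖ξ(t)‖ ≤ δ for all t ≥ T₁(k) := (2/(kσ₂))·log(M/δ), provided k ≥ 2b/(σ₂ δ) and M ≥ δ; i.e., the bound ‖ξ(t)‖ ≤ max{ exp(-(kσ₂/2)t)·M, δ } holds. -/

import Mathlib

open Matrix

set_option maxHeartbeats 1000000 in
theorem stmt_15 (n : ℕ)
    (A : Matrix (Fin n) (Fin n) ℝ) (hA : A.IsSymm)
    (σ₂ : ℝ) (hσ : 0 < σ₂)
    (heig : ∀ v : EuclideanSpace ℝ (Fin n),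
      σ₂ * ‖v‖ ^ 2 ≤ (inner ℝ v (Matrix.toEuclideanLin A v) : ℝ))
    (k b δ M : ℝ) (hδ : 0 < δ) (hb : 0 ≤ b) (hM : δ ≤ M)
    (hk : 2 * b / (σ₂ * δ) ≤ k) (hkpos : 0 < k)
    (r : ℝ → EuclideanSpace ℝ (Fin n)) (hr : ∀ t, ‖r t‖ ≤ b)
    (ξ : ℝ → EuclideanSpace ℝ (Fin n))
    (hξ : ∀ t, HasDerivAt ξ ((-k) • Matrix.toEuclideanLin A (ξ t) + r t) t)
    (hξ0 : ‖ξ 0‖ ≤ M) :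
    ∀ t ≥ (0:ℝ), ‖ξ t‖ ≤ max (M * Real.exp (-(k * σ₂ / 2) * t)) δ := by
  have hMpos : 0 < M := lt_of_lt_of_le hδ hM
  set lam : ℝ := k * σ₂ with hlam
  have hlampos : 0 < lam := mul_pos hkpos hσ
  -- derivative of the squared norm
  set u : ℝ → ℝ := fun t => ‖ξ t‖ ^ 2 with hu_def
  set u' : ℝ → ℝ := fun t =>
    2 * (inner ℝ (ξ t) ((-k) • Matrix.toEuclideanLin A (ξ t) + r t) : ℝ) with hu'_def
  have hu : ∀ t, HasDerivAt u (u' t) t := fun t => (hξ t).norm_sq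
  have hucont : ∀ s t : ℝ, ContinuousOn u (Set.Icc s t) := fun s t x _ =>
    (hu x).continuousAt.continuousWithinAt
  have h2b : 2 * b ≤ lam * δ := by
    have := (div_le_iff₀ (mul_pos hσ hδ)).mp hk
    nlinarith
  -- key differential inequality when the norm is at least δ
  have key : ∀ t : ℝ, δ ≤ ‖ξ t‖ → u' t ≤ -lam * u t := by
    intro t ht
    have h1 : σ₂ * ‖ξ t‖ ^ 2 ≤ (inner ℝ (ξ t) (Matrix.toEuclideanLin A (ξ t)) : ℝ) := heig (ξ t)
    have h2 : (inner ℝ (ξ t) (r t) : ℝ) ≤ ‖ξ t‖ * ‖r t‖ := real_inner_le_norm _ _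
    have h3 : ‖r t‖ ≤ b := hr t
    have hexp : (inner ℝ (ξ t) ((-k) • Matrix.toEuclideanLin A (ξ t) + r t) : ℝ)
        = (-k) * (inner ℝ (ξ t) (Matrix.toEuclideanLin A (ξ t)) : ℝ)
          + (inner ℝ (ξ t) (r t) : ℝ) := by
      rw [inner_add_right, real_inner_smul_right]
    have hnorm : 0 ≤ ‖ξ t‖ := norm_nonneg _
    simp only [hu'_def, hu_def, hexp]
    nlinarith [mul_le_mul_of_nonneg_left h3 hnorm, mul_le_mul_of_nonneg_left ht hδ.le,
      mul_le_mul_of_nonneg_left ht (le_trans hδ.le ht)]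
  -- comparison on an initial interval where the exponential bound stays ≥ δ²
  have claim1 : ∀ s : ℝ, 0 ≤ s → δ ^ 2 ≤ M ^ 2 * Real.exp (-lam * s) →
      ∀ x ∈ Set.Icc (0:ℝ) s, u x ≤ M ^ 2 * Real.exp (-lam * x) := by
    intro s hs hδs x hx
    have hmono : ∀ y ∈ Set.Icc (0:ℝ) s, δ ^ 2 ≤ M ^ 2 * Real.exp (-lam * y) := by
      intro y hy
      refine le_trans hδs ?_
      have : Real.exp (-lam * s) ≤ Real.exp (-lam * y) := by
        apply Real.exp_le_exp.mpr; nlinarith [hy.2]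
      nlinarith [Real.exp_pos (-lam * s)]
    -- for each μ ∈ (0, lam), strict comparison gives u ≤ M² e^{-μ·}
    have hmu : ∀ μ : ℝ, μ ∈ Set.Ioo (0:ℝ) lam → u x ≤ M ^ 2 * Real.exp (-μ * x) := by
      intro μ hμ
      have hB : ∀ y : ℝ, HasDerivAt (fun y => M ^ 2 * Real.exp (-μ * y))
          (M ^ 2 * (Real.exp (-μ * y) * (-μ))) y := by
        intro y
        have h1 : HasDerivAt (fun y : ℝ => -μ * y) (-μ) y := by
          simpa using (hasDerivAt_id y).const_mul (-μ)
        simpa using (h1.exp.const_mul (M ^ 2))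
      refine image_le_of_deriv_right_lt_deriv_boundary (hucont 0 s)
        (fun y _ => (hu y).hasDerivWithinAt) ?_ hB ?_ hx
      · simp only [hu_def]
        rw [mul_zero, Real.exp_zero, mul_one]
        nlinarith [norm_nonneg (ξ 0)]
      · intro y hy heq
        have hyIcc : y ∈ Set.Icc (0:ℝ) s := ⟨hy.1, hy.2.le⟩
        have hμy : Real.exp (-lam * y) ≤ Real.exp (-μ * y) := by
          apply Real.exp_le_exp.mpr; nlinarith [hy.1, hμ.2.le]
        have huy : δ ^ 2 ≤ u y := by
          rw [heq]
          refine le_trans (hmono y hyIcc) ?_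
          nlinarith
        have huy' : δ ^ 2 ≤ ‖ξ y‖ ^ 2 := by simpa [hu_def] using huy
        have hny : δ ≤ ‖ξ y‖ := by
          nlinarith [norm_nonneg (ξ y)]
        have := key y hny
        have hupos : 0 < u y := lt_of_lt_of_le (by positivity) huy
        calc u' y ≤ -lam * u y := this
          _ < -μ * u y := by nlinarith [hμ.2]
          _ = M ^ 2 * (Real.exp (-μ * y) * (-μ)) := by rw [heq]; ring
    -- take the limit μ → lam from the left
    have htend : Filter.Tendsto (fun μ : ℝ => M ^ 2 * Real.exp (-μ * x))
        (nhdsWithin lam (Set.Iio lam)) (nhds (M ^ 2 * Real.exp (-lam * x))) := by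
      apply Filter.Tendsto.mono_left ?_ nhdsWithin_le_nhds
      exact (Continuous.tendsto (by fun_prop) lam)
    refine ge_of_tendsto htend ?_
    filter_upwards [Ioo_mem_nhdsLT_of_mem (by constructor <;> [exact hlampos; exact le_rfl] :
      lam ∈ Set.Ioc (0:ℝ) lam)] with μ hμ
    exact hmu μ hμ
  -- invariance of the ball of radius δ
  have claim2 : ∀ s t : ℝ, s ≤ t → u s ≤ δ ^ 2 → u t ≤ δ ^ 2 := by
    intro s t hst hus
    have := image_le_of_deriv_right_lt_deriv_boundary (f := u) (f' := u')
      (B := fun _ => δ ^ 2) (B' := fun _ => 0) (a := s) (b := t)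
      (hucont s t) (fun y _ => (hu y).hasDerivWithinAt) hus
      (fun y => hasDerivAt_const y _) ?_ (Set.right_mem_Icc.mpr hst)
    · exact this
    · intro y _ heq
      have hny : δ ≤ ‖ξ y‖ := by
        have : ‖ξ y‖ ^ 2 = δ ^ 2 := heq
        nlinarith [norm_nonneg (ξ y)]
      have h1 : u' y ≤ -lam * u y := key y hny
      have huy : u y = δ ^ 2 := heq
      show u' y < 0
      calc u' y ≤ -lam * u y := h1
        _ = -lam * δ ^ 2 := by rw [huy]
        _ < 0 := by nlinarith [mul_pos hlampos (pow_pos hδ 2)]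
  -- now the main goal
  have hsq : ∀ z : ℝ, Real.exp (-lam * z) = Real.exp (-(lam/2) * z) ^ 2 := by
    intro z
    rw [sq, ← Real.exp_add]
    congr 1
    ring
  intro t ht
  by_cases hcase : δ ≤ M * Real.exp (-(lam / 2) * t)
  · -- exponential regime
    have hδ2 : δ ^ 2 ≤ M ^ 2 * Real.exp (-lam * t) := by
      have he : Real.exp (-lam * t) = Real.exp (-(lam/2) * t) ^ 2 := hsq t
      rw [he]
      nlinarith [Real.exp_pos (-(lam/2)*t), hδ.le]
    have h1 := claim1 t ht hδ2 t (Set.right_mem_Icc.mpr ht)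
    have h2 : u t ≤ (M * Real.exp (-(lam/2) * t)) ^ 2 := by
      have he : Real.exp (-lam * t) = Real.exp (-(lam/2) * t) ^ 2 := hsq t
      calc u t ≤ M ^ 2 * Real.exp (-lam * t) := h1
        _ = (M * Real.exp (-(lam/2) * t)) ^ 2 := by rw [he]; ring
    have h2' : ‖ξ t‖ ^ 2 ≤ (M * Real.exp (-(lam/2) * t)) ^ 2 := by
      simpa [hu_def] using h2
    have h3 : ‖ξ t‖ ≤ M * Real.exp (-(lam/2) * t) := by
      nlinarith [norm_nonneg (ξ t), hcase, hδ.le, h2']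
    exact le_trans h3 (le_max_left _ _)
  · -- past the crossover time: the bound is δ
    push_neg at hcase
    set T : ℝ := 2 / lam * Real.log (M / δ) with hT
    have hlogpos : 0 ≤ Real.log (M / δ) := Real.log_nonneg (by
      rw [le_div_iff₀ hδ]; linarith)
    have hT0 : 0 ≤ T := by positivity
    have hTt : T ≤ t := by
      by_contra hc
      push_neg at hc
      have hlog := Real.log_lt_log (mul_pos hMpos (Real.exp_pos _)) hcase
      rw [Real.log_mul hMpos.ne' (Real.exp_ne_zero _), Real.log_exp] at hlog
      have hgt : Real.log (M / δ) < lam / 2 * t := by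
        rw [Real.log_div hMpos.ne' hδ.ne']; linarith
      have hident : lam * T = 2 * Real.log (M / δ) := by
        rw [hT]; field_simp
      have := mul_lt_mul_of_pos_left hc hlampos
      linarith
    -- at time T the exponential bound equals δ²
    have hexpT : M * Real.exp (-(lam/2) * T) = δ := by
      have : -(lam/2) * T = Real.log (δ / M) := by
        rw [hT, Real.log_div hδ.ne' hMpos.ne', Real.log_div hMpos.ne' hδ.ne']
        field_simp
        ring
      rw [this, Real.exp_log (by positivity)]
      field_simp
    have hδ2T : δ ^ 2 ≤ M ^ 2 * Real.exp (-lam * T) := by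
      have he : Real.exp (-lam * T) = Real.exp (-(lam/2) * T) ^ 2 := hsq T
      rw [he]
      nlinarith [hexpT]
    have huT : u T ≤ δ ^ 2 := by
      have h1 := claim1 T hT0 hδ2T T (Set.right_mem_Icc.mpr hT0)
      have he : Real.exp (-lam * T) = Real.exp (-(lam/2) * T) ^ 2 := hsq T
      calc u T ≤ M ^ 2 * Real.exp (-lam * T) := h1
        _ = (M * Real.exp (-(lam/2) * T)) ^ 2 := by rw [he]; ring
        _ = δ ^ 2 := by rw [hexpT]
    have hut : ‖ξ t‖ ^ 2 ≤ δ ^ 2 := by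
      simpa [hu_def] using claim2 T t hTt huT
    refine le_max_of_le_right ?_
    nlinarith [norm_nonneg (ξ t), hδ.le]
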